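/- For an irreducible matrix A ∈ Rmax^{n×n}, the max-plus eigenvalue is unique: if A ⊗ v = λ ⊗ v and A ⊗ w = μ ⊗ w with v, w not identically -∞, then λ = μ. -/

import Mathlib

/-- The max-plus semiring carrier: ℝ ∪ {-∞}. -/
abbrev Rmax := WithBot ℝ

/-- Max-plus matrix product: [A ⊗ B]_{ij} = max_k ([A]_{ik} + [B]_{kj}). -/
def mpMul {m n p : ℕ} (A : Matrix (Fin m) (Fin n) Rmax)
    (B : Matrix (Fin n) (Fin p) Rmax) : Matrix (Fin m) (Fin p) Rmax :=
  fun i j => Finset.univ.sup fun k => A i k + B k j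

/-- Max-plus identity matrix. -/
def mpId (n : ℕ) : Matrix (Fin n) (Fin n) Rmax :=
  fun i j => if i = j then (0 : Rmax) else ⊥

/-- Max-plus matrix power. -/
def mpPow {n : ℕ} (A : Matrix (Fin n) (Fin n) Rmax) : ℕ → Matrix (Fin n) (Fin n) Rmax
  | 0 => mpId n
  | p + 1 => mpMul A (mpPow A p)

/-- Max-plus matrix-vector product. -/
def mpMulVec {m n : ℕ} (A : Matrix (Fin m) (Fin n) Rmax) (v : Fin n → Rmax) :
    Fin m → Rmax :=
  fun i => Finset.univ.sup fun k => A i k + v k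

/-- Irreducibility: the precedence graph is strongly connected (a path between
any two distinct vertices; arc (j,i) exists iff [A]_{ij} ≠ -∞, and a path of
length p from j to i exists iff [A^{⊗p}]_{ij} ≠ -∞). -/
def mpIrreducible {n : ℕ} (A : Matrix (Fin n) (Fin n) Rmax) : Prop :=
  ∀ i j : Fin n, i ≠ j → ∃ p : ℕ, 1 ≤ p ∧ mpPow A p i j ≠ ⊥

lemma rmax_add_max (c x y : Rmax) : c + (x ⊔ y) = (c + x) ⊔ (c + y) := by
  have hm : Monotone (fun z : Rmax => c + z) := fun a b h => add_le_add_right h c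
  exact hm.map_max

lemma rmax_add_sup {ι : Type*} (s : Finset ι) (hs : s.Nonempty) (c : Rmax) (f : ι → Rmax) :
    c + s.sup f = s.sup fun k => c + f k := by
  induction hs using Finset.Nonempty.cons_induction with
  | singleton a => simp
  | cons a s ha hs ih => simp [Finset.sup_cons, rmax_add_max, ih]

lemma rmax_sup_add {ι : Type*} (s : Finset ι) (hs : s.Nonempty) (c : Rmax) (f : ι → Rmax) :
    s.sup f + c = s.sup fun k => f k + c := by
  rw [add_comm, rmax_add_sup s hs]
  exact Finset.sup_congr rfl fun k _ => add_comm _ _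

lemma mpMulVec_id {n : ℕ} (v : Fin n → Rmax) : mpMulVec (mpId n) v = v := by
  funext i
  apply le_antisymm
  · exact Finset.sup_le fun k _ => by
      by_cases h : i = k
      · subst h; simp [mpId]
      · simp [mpId, h]
  · have := Finset.le_sup (f := fun k => mpId n i k + v k) (Finset.mem_univ i)
    refine le_trans ?_ this
    simp [mpId]

lemma mpMulVec_assoc {n : ℕ} (hn : 0 < n) (A B : Matrix (Fin n) (Fin n) Rmax)
    (v : Fin n → Rmax) : mpMulVec (mpMul A B) v = mpMulVec A (mpMulVec B v) := by
  haveI : NeZero n := ⟨hn.ne'⟩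
  have hne : (Finset.univ : Finset (Fin n)).Nonempty := Finset.univ_nonempty
  funext i
  show (Finset.univ.sup fun k => mpMul A B i k + v k) = _
  calc (Finset.univ.sup fun k => mpMul A B i k + v k)
      = Finset.univ.sup fun k => Finset.univ.sup fun j => A i j + B j k + v k := by
        refine Finset.sup_congr rfl fun k _ => ?_
        exact rmax_sup_add _ hne _ _
    _ = Finset.univ.sup fun j => Finset.univ.sup fun k => A i j + (B j k + v k) := by
        rw [Finset.sup_comm]
        exact Finset.sup_congr rfl fun j _ => Finset.sup_congr rfl fun k _ => add_assoc _ _ _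
    _ = Finset.univ.sup fun j => A i j + Finset.univ.sup fun k => B j k + v k := by
        refine Finset.sup_congr rfl fun j _ => ?_
        exact (rmax_add_sup _ hne _ _).symm
    _ = _ := rfl

lemma mpMulVec_pow {n : ℕ} (hn : 0 < n) (A : Matrix (Fin n) (Fin n) Rmax)
    (l : Rmax) (v : Fin n → Rmax) (h1 : mpMulVec A v = fun i => l + v i) (p : ℕ) :
    mpMulVec (mpPow A p) v = fun i => p • l + v i := by
  haveI : NeZero n := ⟨hn.ne'⟩
  have hne : (Finset.univ : Finset (Fin n)).Nonempty := Finset.univ_nonempty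
  induction p with
  | zero => simp [mpPow, mpMulVec_id]
  | succ p ih =>
      show mpMulVec (mpMul A (mpPow A p)) v = _
      rw [mpMulVec_assoc hn, ih]
      funext i
      show (Finset.univ.sup fun k => A i k + (p • l + v k)) = _
      calc (Finset.univ.sup fun k => A i k + (p • l + v k))
          = Finset.univ.sup fun k => p • l + (A i k + v k) := by
            exact Finset.sup_congr rfl fun k _ => add_left_comm _ _ _
        _ = p • l + Finset.univ.sup fun k => A i k + v k := (rmax_add_sup _ hne _ _).symm
        _ = p • l + (l + v i) := by rw [show (Finset.univ.sup fun k => A i k + v k) = l + v i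
              from congrFun h1 i]
        _ = (p + 1) • l + v i := by rw [succ_nsmul, ← add_assoc, add_comm (p • l) l, add_assoc,
              ← add_assoc, add_comm l (p • l)]

lemma eigen_ne_bot {n : ℕ} (A : Matrix (Fin n) (Fin n) Rmax) (hA : mpIrreducible A)
    (l : Rmax) (v : Fin n → Rmax) (hv : v ≠ fun _ => (⊥ : Rmax))
    (h1 : mpMulVec A v = fun i => l + v i) : ∀ i, v i ≠ ⊥ := by
  have hn : 0 < n := by
    rcases Nat.eq_zero_or_pos n with h | h
    · subst h; exact absurd (funext fun i => i.elim0) hv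
    · exact h
  obtain ⟨j, hj⟩ : ∃ j, v j ≠ ⊥ := by
    by_contra h
    push_neg at h
    exact hv (funext h)
  intro i
  by_cases hij : i = j
  · exact hij ▸ hj
  · obtain ⟨p, hp1, hpij⟩ := hA i j hij
    have hle : mpPow A p i j + v j ≤ mpMulVec (mpPow A p) v i :=
      Finset.le_sup (f := fun k => mpPow A p i k + v k) (Finset.mem_univ j)
    have hne : mpPow A p i j + v j ≠ ⊥ := by
      rw [Ne, WithBot.add_eq_bot]; tauto
    have : mpMulVec (mpPow A p) v i ≠ ⊥ := fun h =>
      hne (le_bot_iff.mp (h ▸ hle))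
    rw [mpMulVec_pow hn A l v h1 p] at this
    simp only [Ne, WithBot.add_eq_bot, not_or] at this
    exact this.2

lemma eigen_le {n : ℕ} (hn : 0 < n) (A : Matrix (Fin n) (Fin n) Rmax)
    (l m : Rmax) (v w : Fin n → Rmax)
    (hvb : ∀ i, v i ≠ ⊥) (hwb : ∀ i, w i ≠ ⊥)
    (h1 : mpMulVec A v = fun i => l + v i)
    (h2 : mpMulVec A w = fun i => m + w i) : l ≤ m := by
  haveI : NeZero n := ⟨hn.ne'⟩
  have hne : (Finset.univ : Finset (Fin n)).Nonempty := Finset.univ_nonempty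
  set v' : Fin n → ℝ := fun i => (v i).unbot (hvb i) with hv'
  set w' : Fin n → ℝ := fun i => (w i).unbot (hwb i) with hw'
  have hvc : ∀ i, v i = (v' i : Rmax) := fun i => (WithBot.coe_unbot _ _).symm
  have hwc : ∀ i, w i = (w' i : Rmax) := fun i => (WithBot.coe_unbot _ _).symm
  obtain ⟨i0, _, hi0⟩ := Finset.exists_mem_eq_sup' hne (fun i => v' i - w' i)
  set α : ℝ := Finset.univ.sup' hne fun i => v' i - w' i with hα
  have hkey : ∀ k, v k ≤ (α : Rmax) + w k := by
    intro k
    have : v' k - w' k ≤ α := Finset.le_sup' (fun i => v' i - w' i) (Finset.mem_univ k)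
    rw [hvc k, hwc k, ← WithBot.coe_add, WithBot.coe_le_coe]
    linarith
  have hv0 : v i0 = (α : Rmax) + w i0 := by
    rw [hvc i0, hwc i0, ← WithBot.coe_add, WithBot.coe_inj, hi0]
    ring
  have step : l + v i0 ≤ m + v i0 := by
    calc l + v i0 = Finset.univ.sup fun k => A i0 k + v k := (congrFun h1 i0).symm
      _ ≤ Finset.univ.sup fun k => A i0 k + ((α : Rmax) + w k) :=
          Finset.sup_mono_fun fun k _ => add_le_add_right (hkey k) _
      _ = Finset.univ.sup fun k => (α : Rmax) + (A i0 k + w k) :=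
          Finset.sup_congr rfl fun k _ => add_left_comm _ _ _
      _ = (α : Rmax) + Finset.univ.sup fun k => A i0 k + w k := (rmax_add_sup _ hne _ _).symm
      _ = (α : Rmax) + (m + w i0) := by rw [show (Finset.univ.sup fun k => A i0 k + w k)
            = m + w i0 from congrFun h2 i0]
      _ = m + ((α : Rmax) + w i0) := add_left_comm _ _ _
      _ = m + v i0 := by rw [← hv0]
  exact (WithBot.add_le_add_iff_right (hvb i0)).mp step

/-- An irreducible matrix has a unique max-plus eigenvalue. -/
theorem mp_irreducible_eigenvalue_unique {n : ℕ}
    (A : Matrix (Fin n) (Fin n) Rmax) (hA : mpIrreducible A)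
    (l m : Rmax) (v w : Fin n → Rmax)
    (hv : v ≠ fun _ => (⊥ : Rmax)) (hw : w ≠ fun _ => (⊥ : Rmax))
    (h1 : mpMulVec A v = fun i => l + v i)
    (h2 : mpMulVec A w = fun i => m + w i) :
    l = m := by
  have hn : 0 < n := by
    rcases Nat.eq_zero_or_pos n with h | h
    · subst h; exact absurd (funext fun i => i.elim0) hv
    · exact h
  have hvb := eigen_ne_bot A hA l v hv h1
  have hwb := eigen_ne_bot A hA m w hw h2
  exact le_antisymm (eigen_le hn A l m v w hvb hwb h1 h2)
    (eigen_le hn A m l w v hwb hvb h2 h1)
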